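/- Let r > 0 and let Φ be holomorphic and injective on the open set 𝔻 ∪ B(1,r), where B(1,r) is the open disc of radius r centered at 1. Suppose Φ(𝔻) ⊆ 𝔻 and Φ(1) = 1. Then Φ′(1) is a strictly positive real number, and (1 − Φ(z))/(1 − z) → Φ′(1) as z → 1 with z ∈ 𝔻 (the unrestricted limit in 𝔻). -/

import Mathlib

open Complex Filter Real Set Topology

/-- The open unit disc in the complex plane. -/
noncomputable def unitDisc : Set ℂ := {z : ℂ | ‖z‖ < 1}

lemma deriv_ne_zero_of_injOn {f : ℂ → ℂ} {s : Set ℂ} (hs : IsOpen s) {z₀ : ℂ}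
    (hz : z₀ ∈ s) (hf : DifferentiableOn ℂ f s) (hinj : Set.InjOn f s) :
    deriv f z₀ ≠ 0 := by
  intro h0
  have hsn : s ∈ 𝓝 z₀ := hs.mem_nhds hz
  have hFa : AnalyticAt ℂ (fun z => f z - f z₀) z₀ :=
    (hf.analyticAt hsn).sub analyticAt_const
  -- order is not ⊤
  have hord_ne_top : analyticOrderAt (fun z => f z - f z₀) z₀ ≠ ⊤ := by
    intro htop
    rw [analyticOrderAt_eq_top] at htop
    have h2 : ∀ᶠ z in 𝓝 z₀, f z = f z₀ ∧ z ∈ s := by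
      filter_upwards [htop, hsn] with z h1 h2
      exact ⟨sub_eq_zero.mp h1, h2⟩
    obtain ⟨δ, hδ, hball⟩ := Metric.eventually_nhds_iff_ball.mp h2
    set z₁ : ℂ := z₀ + ((δ / 2 : ℝ) : ℂ) with hz₁def
    have hmem : z₁ ∈ Metric.ball z₀ δ := by
      simp only [hz₁def, Metric.mem_ball, Complex.dist_eq, add_sub_cancel_left, Complex.norm_real, Real.norm_eq_abs]
      rw [abs_of_pos (by positivity)]
      linarith
    obtain ⟨hfz₁, hz₁s⟩ := hball z₁ hmem
    have heq : z₁ = z₀ := hinj hz₁s hz hfz₁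
    rw [hz₁def, add_eq_left] at heq
    have : (δ / 2 : ℝ) = 0 := by exact_mod_cast heq
    linarith
  obtain ⟨n, hn⟩ := WithTop.ne_top_iff_exists.mp hord_ne_top
  obtain ⟨g, hg, hg0, hev⟩ := (hFa.analyticOrderAt_eq_natCast (n := n)).mp hn.symm
  simp only [smul_eq_mul] at hev
  -- n ≠ 0
  have hn0 : n ≠ 0 := by
    intro h
    have := hev.self_of_nhds
    simp [h] at this
    exact hg0 this.symm
  -- n ≠ 1
  have hn1 : n ≠ 1 := by
    intro h
    subst h
    have hevEq : (fun z => f z - f z₀) =ᶠ[nhds z₀] (fun z => (z - z₀) ^ 1 * g z) := hev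
    have hd2 : HasDerivAt (fun z => (z - z₀) ^ 1 * g z) (g z₀) z₀ := by
      have h' := (((hasDerivAt_id z₀).sub_const z₀).fun_pow 1).fun_mul hg.differentiableAt.hasDerivAt
      exact h'.congr_deriv (by simp)
    have hgz : deriv f z₀ = g z₀ := by
      rw [← deriv_sub_const (f z₀), hevEq.deriv_eq, hd2.deriv]
    exact hg0 (by rw [← hgz, h0])
  have hn2 : 2 ≤ n := by omega
  -- construct n-th root of g
  set c : ℂ := Complex.exp (Complex.log (g z₀) / n) with hc
  set σ : ℂ → ℂ := fun z => Complex.exp (Complex.log (g z / g z₀) / n) * c with hσ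
  have hncast : (n : ℂ) ≠ 0 := Nat.cast_ne_zero.mpr hn0
  have hσa : AnalyticAt ℂ σ z₀ := by
    have h1 : AnalyticAt ℂ (fun z => g z / g z₀) z₀ := hg.div analyticAt_const hg0
    have h2 : (fun z => g z / g z₀) z₀ ∈ Complex.slitPlane := by
      simp only [div_self hg0]; exact Complex.one_mem_slitPlane
    exact (((h1.clog h2).div analyticAt_const hncast).cexp).mul analyticAt_const
  have hσ0 : σ z₀ = c := by
    simp [hσ, div_self hg0, Complex.log_one]
  have hc0 : c ≠ 0 := Complex.exp_ne_zero _
  have hσn : ∀ᶠ z in 𝓝 z₀, σ z ^ n = g z := by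
    filter_upwards [hg.continuousAt.eventually_ne hg0] with z hgz
    rw [hσ, mul_pow, ← Complex.exp_nat_mul, ← Complex.exp_nat_mul,
      mul_div_cancel₀ _ hncast, mul_div_cancel₀ _ hncast,
      Complex.exp_log (div_ne_zero hgz hg0), Complex.exp_log hg0,
      div_mul_cancel₀ _ hg0]
  set h : ℂ → ℂ := fun z => (z - z₀) * σ z with hhdef
  have hha : AnalyticAt ℂ h z₀ := ((analyticAt_id.sub analyticAt_const)).mul hσa
  have hhd : HasDerivAt h (σ z₀) z₀ := by
    have := ((hasDerivAt_id z₀).sub_const z₀).fun_mul hσa.differentiableAt.hasDerivAt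
    simpa using this
  obtain ⟨p, hp⟩ := hha
  have hsd : HasStrictDerivAt h (σ z₀) z₀ := by
    have h1 := hp.hasStrictDerivAt
    have h2 := h1.hasDerivAt
    rwa [h2.unique hhd] at h1
  have hmap : map h (𝓝 z₀) = 𝓝 (0 : ℂ) := by
    have := hsd.map_nhds_eq (by rw [hσ0]; exact hc0)
    simpa [hhdef] using this
  have hE : ∀ᶠ z in 𝓝 z₀, f z - f z₀ = h z ^ n ∧ z ∈ s := by
    filter_upwards [hev, hσn, hsn] with z h1 h2 h3
    exact ⟨by rw [hhdef]; rw [mul_pow, h2, h1], h3⟩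
  obtain ⟨t, ht, htp⟩ := eventually_iff_exists_mem.mp hE
  have himg : h '' t ∈ 𝓝 (0 : ℂ) := by
    rw [← hmap]; exact image_mem_map ht
  obtain ⟨ε, hε, hball⟩ := Metric.mem_nhds_iff.mp himg
  have hprim := Complex.isPrimitiveRoot_exp n hn0
  set ζ : ℂ := Complex.exp (2 * Real.pi * I / n) with hζ
  have hζn : ζ ^ n = 1 := hprim.pow_eq_one
  have hζ1 : ζ ≠ 1 := hprim.ne_one (by omega)
  have hζabs : ‖ζ‖ = 1 := by
    rw [hζ, show (2 * (Real.pi : ℂ) * I / n) = ((2 * Real.pi / (n : ℝ) : ℝ) : ℂ) * I by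
      push_cast; ring]
    exact Complex.norm_exp_ofReal_mul_I _
  set w : ℂ := ((ε / 2 : ℝ) : ℂ) with hw
  have hwball : w ∈ Metric.ball (0 : ℂ) ε := by
    simp only [hw, Metric.mem_ball, dist_zero_right, Complex.norm_real, Real.norm_eq_abs]
    rw [abs_of_pos (by positivity)]; linarith
  have hw0 : w ≠ 0 := by
    simp only [hw, ne_eq, Complex.ofReal_eq_zero]
    positivity
  have hζwball : ζ * w ∈ Metric.ball (0 : ℂ) ε := by
    simp only [Metric.mem_ball, dist_zero_right, norm_mul, hζabs, one_mul]
    simpa [Metric.mem_ball, dist_zero_right] using hwball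
  obtain ⟨z₁, hz₁t, hz₁⟩ := hball hwball
  obtain ⟨z₂, hz₂t, hz₂⟩ := hball hζwball
  have hfz : f z₁ = f z₂ := by
    have e1 := (htp z₁ hz₁t).1
    have e2 := (htp z₂ hz₂t).1
    rw [hz₁] at e1
    rw [hz₂] at e2
    have : f z₁ - f z₀ = f z₂ - f z₀ := by
      rw [e1, e2, mul_pow, hζn, one_mul]
    linear_combination this
  have hz12 : z₁ = z₂ := hinj (htp z₁ hz₁t).2 (htp z₂ hz₂t).2 hfz
  rw [hz12, hz₂] at hz₁
  exact hζ1 (by field_simp at hz₁; tauto)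


/-- If `Φ` is holomorphic and injective on `𝔻 ∪ B(1,r)`, maps `𝔻` into `𝔻`, and fixes `1`,
then `Φ'(1)` is a strictly positive real number and `(1 - Φ(z))/(1 - z) → Φ'(1)` as
`z → 1` unrestrictedly inside `𝔻`. -/
theorem boundary_derivative_positive (r : ℝ) (hr : 0 < r) (Φ : ℂ → ℂ)
    (hdiff : DifferentiableOn ℂ Φ (unitDisc ∪ Metric.ball (1 : ℂ) r))
    (hinj : Set.InjOn Φ (unitDisc ∪ Metric.ball (1 : ℂ) r))
    (hmaps : Set.MapsTo Φ unitDisc unitDisc)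
    (hfix : Φ 1 = 1) :
    ∃ c : ℝ, 0 < c ∧ deriv Φ 1 = (c : ℂ) ∧
      Tendsto (fun z : ℂ => (1 - Φ z) / (1 - z)) (nhdsWithin 1 unitDisc)
        (nhds ((c : ℝ) : ℂ)) := by
  have hUopen : IsOpen (unitDisc ∪ Metric.ball (1 : ℂ) r) :=
    (isOpen_lt continuous_norm continuous_const).union Metric.isOpen_ball
  have h1U : (1 : ℂ) ∈ unitDisc ∪ Metric.ball (1 : ℂ) r :=
    Or.inr (Metric.mem_ball_self hr)
  have hd1 : AnalyticAt ℂ Φ 1 := hdiff.analyticAt (hUopen.mem_nhds h1U)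
  set d : ℂ := deriv Φ 1 with hd
  have hder : HasDerivAt Φ d 1 := hd1.differentiableAt.hasDerivAt
  have hdne : d ≠ 0 := deriv_ne_zero_of_injOn hUopen h1U hdiff hinj
  -- the slope limit
  have hslope : Tendsto (fun z : ℂ => (1 - Φ z) / (1 - z)) (𝓝[≠] (1 : ℂ)) (𝓝 d) := by
    have h1 := hasDerivAt_iff_tendsto_slope.mp hder
    refine h1.congr' ?_
    filter_upwards [self_mem_nhdsWithin] with z hz
    have hz1 : z - 1 ≠ 0 := sub_ne_zero.mpr hz
    have hz2 : (1 : ℂ) - z ≠ 0 := sub_ne_zero.mpr (Ne.symm hz)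
    rw [slope_def_field, hfix, div_eq_div_iff hz1 hz2]
    ring
  have hsub : unitDisc ⊆ {(1 : ℂ)}ᶜ := by
    intro z hz
    simp only [unitDisc, mem_setOf_eq] at hz
    simp only [mem_compl_iff, mem_singleton_iff]
    intro h
    rw [h] at hz
    simp at hz
  -- key inequality
  have key : ∀ θ : ℝ, 0 < Real.cos θ → 0 ≤ (Complex.exp ((θ : ℂ) * I) * d).re := by
    intro θ hθ
    set e : ℂ := Complex.exp ((θ : ℂ) * I) with he
    have habse : ‖e‖ = 1 := Complex.norm_exp_ofReal_mul_I θ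
    have he0 : e ≠ 0 := Complex.exp_ne_zero _
    have here' : e.re = Real.cos θ := Complex.exp_ofReal_mul_I_re θ
    set w : ℝ → ℂ := fun s => 1 - (s : ℂ) * e with hwdef
    have hw1 : Tendsto w (𝓝[>] (0 : ℝ)) (𝓝 (1 : ℂ)) := by
      have hc : Continuous w :=
        continuous_const.sub (Complex.continuous_ofReal.mul continuous_const)
      have h0 := hc.tendsto 0
      simp only [hwdef, Complex.ofReal_zero, zero_mul, sub_zero] at h0
      exact h0.mono_left nhdsWithin_le_nhds
    have hsmall : ∀ᶠ s in 𝓝[>] (0 : ℝ), 0 < s ∧ s < Real.cos θ := by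
      filter_upwards [self_mem_nhdsWithin,
        nhdsWithin_le_nhds (Iio_mem_nhds hθ)] with s h1 h2
      exact ⟨h1, h2⟩
    have hnsq : ∀ s : ℝ, Complex.normSq (w s) = 1 - 2 * s * Real.cos θ + s ^ 2 := by
      intro s
      have h1 : Complex.normSq ((s : ℂ) * e) = s ^ 2 := by
        rw [Complex.normSq_mul, Complex.normSq_ofReal, Complex.normSq_eq_norm_sq, habse]
        ring
      have h2 : ((1 : ℂ) * (starRingEnd ℂ) ((s : ℂ) * e)).re = s * Real.cos θ := by
        rw [one_mul, Complex.conj_re, Complex.re_ofReal_mul, here']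
      simp only [hwdef]
      rw [Complex.normSq_sub, h1, h2, Complex.normSq_one]
      ring
    have hwmem : ∀ᶠ s in 𝓝[>] (0 : ℝ), w s ∈ unitDisc := by
      filter_upwards [hsmall] with s hs
      obtain ⟨hs0, hs1⟩ := hs
      have h1 : Complex.normSq (w s) < 1 := by rw [hnsq s]; nlinarith
      have h2 : ‖w s‖ ^ 2 < 1 := by rwa [Complex.sq_norm]
      have h3 := norm_nonneg (w s)
      simp only [unitDisc, mem_setOf_eq]
      nlinarith
    have hwne : ∀ᶠ s in 𝓝[>] (0 : ℝ), w s ∈ ({(1 : ℂ)}ᶜ : Set ℂ) := by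
      filter_upwards [self_mem_nhdsWithin] with s hs
      simp only [hwdef, mem_compl_iff, mem_singleton_iff, sub_eq_self]
      intro h
      rcases mul_eq_zero.mp h with h | h
      · exact (ne_of_gt hs) (by exact_mod_cast h)
      · exact he0 h
    have hwt : Tendsto w (𝓝[>] (0 : ℝ)) (𝓝[≠] (1 : ℂ)) :=
      tendsto_nhdsWithin_iff.mpr ⟨hw1, hwne⟩
    have hq : Tendsto (fun s : ℝ => (1 - Φ (w s)) / (1 - w s)) (𝓝[>] (0 : ℝ)) (𝓝 d) :=
      hslope.comp hwt
    have hv : Tendsto (fun s : ℝ => (1 - Φ (w s)) / (s : ℂ)) (𝓝[>] (0 : ℝ)) (𝓝 (e * d)) := by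
      have h2 := hq.const_mul e
      refine h2.congr' ?_
      filter_upwards [self_mem_nhdsWithin] with s hs
      have hs0 : (s : ℂ) ≠ 0 := Complex.ofReal_ne_zero.mpr (ne_of_gt hs)
      have hws : 1 - w s = (s : ℂ) * e := by rw [hwdef]; ring
      rw [hws]
      field_simp
    have hnum : Tendsto (fun s : ℝ => (1 - Complex.normSq (Φ (w s))) / s) (𝓝[>] (0 : ℝ))
        (𝓝 (2 * (e * d).re)) := by
      have hre : Tendsto (fun s : ℝ => ((1 - Φ (w s)) / (s : ℂ)).re) (𝓝[>] (0 : ℝ))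
          (𝓝 ((e * d).re)) := (Complex.continuous_re.tendsto _).comp hv
      have hidt : Tendsto (fun s : ℝ => s) (𝓝[>] (0 : ℝ)) (𝓝 (0 : ℝ)) :=
        tendsto_id.mono_left nhdsWithin_le_nhds
      have hns : Tendsto (fun s : ℝ => s * Complex.normSq ((1 - Φ (w s)) / (s : ℂ)))
          (𝓝[>] (0 : ℝ)) (𝓝 (0 * Complex.normSq (e * d))) :=
        hidt.mul ((Complex.continuous_normSq.tendsto _).comp hv)
      have combined := (hre.const_mul 2).sub hns
      rw [zero_mul, sub_zero] at combined
      refine combined.congr' ?_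
      filter_upwards [self_mem_nhdsWithin] with s hs
      have hs0 : s ≠ 0 := ne_of_gt hs
      set v : ℂ := 1 - Φ (w s) with hvdef
      have hΦ : Φ (w s) = 1 - v := by rw [hvdef]; ring
      have hnv : Complex.normSq (Φ (w s)) = 1 + Complex.normSq v - 2 * v.re := by
        rw [hΦ, Complex.normSq_sub, Complex.normSq_one, one_mul, Complex.conj_re]
      have hre' : (v / (s : ℂ)).re = v.re / s := Complex.div_ofReal_re v s
      have hns' : Complex.normSq (v / (s : ℂ)) = Complex.normSq v / (s * s) := by
        rw [map_div₀, Complex.normSq_ofReal]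
      rw [hre', hns', hnv]
      field_simp
      ring
    have hpos : ∀ᶠ s in 𝓝[>] (0 : ℝ), 0 ≤ (1 - Complex.normSq (Φ (w s))) / s := by
      filter_upwards [hwmem, self_mem_nhdsWithin] with s hm hs
      have h1 : ‖Φ (w s)‖ < 1 := hmaps hm
      have h2 : Complex.normSq (Φ (w s)) < 1 := by
        have h3 := Complex.sq_norm (Φ (w s))
        nlinarith [norm_nonneg (Φ (w s))]
      exact div_nonneg (by linarith) hs.le
    have := ge_of_tendsto hnum hpos
    linarith
  -- conclude d is real and positive
  have hre0 : 0 ≤ d.re := by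
    have h := key 0 (by simp)
    simpa using h
  have harctan : ∀ x : ℝ, 0 ≤ d.re - x * d.im := by
    intro x
    have hspos : 0 < Real.sqrt (1 + x ^ 2) := Real.sqrt_pos.mpr (by positivity)
    have hcos := Real.cos_arctan x
    have hsin := Real.sin_arctan x
    have hcpos : 0 < Real.cos (Real.arctan x) := by rw [hcos]; positivity
    have h := key (Real.arctan x) hcpos
    have hmulre : (Complex.exp ((Real.arctan x : ℂ) * I) * d).re
        = Real.cos (Real.arctan x) * d.re - Real.sin (Real.arctan x) * d.im := by
      rw [Complex.mul_re, Complex.exp_ofReal_mul_I_re, Complex.exp_ofReal_mul_I_im]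
    rw [hmulre, hcos, hsin] at h
    rw [div_mul_eq_mul_div, div_mul_eq_mul_div, one_mul, ← sub_div] at h
    rcases div_nonneg_iff.mp h with ⟨h1, _⟩ | ⟨_, h2'⟩
    · exact h1
    · linarith
  have him : d.im = 0 := by
    by_contra hne
    have h := harctan ((d.re + 1) / d.im)
    rw [div_mul_cancel₀ _ hne] at h
    linarith
  have hrepos : 0 < d.re := by
    rcases hre0.lt_or_eq with h | h
    · exact h
    · exact absurd (by apply Complex.ext <;> simp [← h, him]) hdne
  refine ⟨d.re, hrepos, ?_, ?_⟩
  · apply Complex.ext <;> simp [him]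
  · have hh : ((d.re : ℝ) : ℂ) = d := by apply Complex.ext <;> simp [him]
    rw [hh]
    exact hslope.mono_left (nhdsWithin_mono _ hsub)
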